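/- Consider the binary model 𝒳 = 𝒴 = 𝒮 = {0,1} with i.i.d. equiprobable demand X₁,…,X_T (P(X_t = 0) = P(X_t = 1) = 1/2) independent of the initial state S₁, battery dynamics S_{t+1} = S_t + Y_t − X_t, and the deterministic policy Y_t = 1 − S_t. This policy is feasible (Y_t ∈ 𝒴₀(S_t − X_t) almost surely), and its leakage satisfies (1/T) I(S₁, X^T; Y^T) ≥ (T−1)/T, since X_t = Y_{t+1} for 1 ≤ t ≤ T−1, so that X^{T−1} is a deterministic function of Y^T. -/
import Mathlib


open Finset
open scoped Classical

namespace SmartMeter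

/-! ### Basic information measures for finitely supported distributions.
All entropies and mutual informations are in bits (base-2 logarithms). -/

/-- Probability that the random variable `Z` takes the value `z` under the pmf `p`. -/
noncomputable def pr {Ω α : Type*} [Fintype Ω] [DecidableEq α]
    (p : Ω → ℝ) (Z : Ω → α) (z : α) : ℝ :=
  ∑ ω ∈ Finset.univ.filter (fun ω => Z ω = z), p ω

/-- Shannon entropy (in bits) of the random variable `Z` under the pmf `p`. -/
noncomputable def ent {Ω α : Type*} [Fintype Ω] [DecidableEq α]
    (p : Ω → ℝ) (Z : Ω → α) : ℝ :=
  -∑ z ∈ Finset.univ.image Z, pr p Z z * Real.logb 2 (pr p Z z)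

/-- Mutual information `I(A; B)`. -/
noncomputable def mutInfo {Ω α β : Type*} [Fintype Ω] [DecidableEq α] [DecidableEq β]
    (p : Ω → ℝ) (A : Ω → α) (B : Ω → β) : ℝ :=
  ent p A + ent p B - ent p (fun ω => (A ω, B ω))

/-- Conditional entropy `H(A | C)`. -/
noncomputable def condEnt {Ω α γ : Type*} [Fintype Ω] [DecidableEq α] [DecidableEq γ]
    (p : Ω → ℝ) (A : Ω → α) (C : Ω → γ) : ℝ :=
  ent p (fun ω => (A ω, C ω)) - ent p C

/-- Conditional mutual information `I(A; B | C)`. -/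
noncomputable def condMutInfo {Ω α β γ : Type*} [Fintype Ω] [DecidableEq α] [DecidableEq β]
    [DecidableEq γ] (p : Ω → ℝ) (A : Ω → α) (B : Ω → β) (C : Ω → γ) : ℝ :=
  ent p (fun ω => (A ω, C ω)) + ent p (fun ω => (B ω, C ω))
    - ent p (fun ω => (A ω, B ω, C ω)) - ent p C

/-- `p` is a probability mass function on the finite type `Ω`. -/
def IsPMF {Ω : Type*} [Fintype Ω] (p : Ω → ℝ) : Prop :=
  (∀ ω, 0 ≤ p ω) ∧ ∑ ω, p ω = 1

/-- Extension of a pmf on `{0, …, n}` to an integer-indexed function (zero out of range). -/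
noncomputable def extZ {n : ℕ} (f : Fin (n + 1) → ℝ) (k : ℤ) : ℝ :=
  if h : 0 ≤ k ∧ k ≤ (n : ℤ) then f ⟨k.toNat, by omega⟩ else 0

/-! ### The single-letter quantity `J*` -/

/-- `I(S - X; X)` for independent `X ~ PX` on `{0,…,mx}` and `S ~ θ` on `{0,…,ms}`. -/
noncomputable def iidMI (mx ms : ℕ) (PX : Fin (mx + 1) → ℝ) (θ : Fin (ms + 1) → ℝ) : ℝ :=
  mutInfo (fun ω : Fin (mx + 1) × Fin (ms + 1) => PX ω.1 * θ ω.2)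
    (fun ω => ((ω.2 : ℕ) : ℤ) - ((ω.1 : ℕ) : ℤ)) (fun ω => ω.1)

/-- `J* = min over pmfs θ on 𝒮 of I(S - X; X)`. -/
noncomputable def Jstar (mx ms : ℕ) (PX : Fin (mx + 1) → ℝ) : ℝ :=
  sInf {r : ℝ | ∃ θ : Fin (ms + 1) → ℝ, IsPMF θ ∧ iidMI mx ms PX θ = r}

/-! ### The structured policy `b*` -/

/-- `ξ(w) = Σ_{(x,s) : s - x = w} PX(x) θ(s)`, the pmf of `W = S - X`. -/
noncomputable def xiOf (mx ms : ℕ) (PX : Fin (mx + 1) → ℝ) (θ : Fin (ms + 1) → ℝ)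
    (w : ℤ) : ℝ :=
  ∑ x : Fin (mx + 1), ∑ s : Fin (ms + 1),
    if ((s : ℕ) : ℤ) - ((x : ℕ) : ℤ) = w then PX x * θ s else 0

/-- The structured policy with respect to `(θ, ξ)`:
`b(y|w) = PX(y) θ(y + w) / ξ(w)` for `y ∈ 𝒳 ∩ 𝒴₀(w)` (when `ξ(w) > 0`), else `0`. -/
noncomputable def bstar (mx my ms : ℕ) (PX : Fin (mx + 1) → ℝ) (θ : Fin (ms + 1) → ℝ)
    (w : ℤ) (y : Fin (my + 1)) : ℝ :=
  if xiOf mx ms PX θ w = 0 then 0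
  else extZ PX ((y : ℕ) : ℤ) * extZ θ (((y : ℕ) : ℤ) + w) / xiOf mx ms PX θ w

/-! ### Trajectory spaces, policies and induced joint laws.
Time is indexed from `0`; `ω = (s₁, x, y)` records the initial battery state `S₁ = ω.1`,
the demands `X_{t+1} = ω.2.1 t` and the outputs `Y_{t+1} = ω.2.2 t` for `t = 0, …, T-1`. -/

/-- Trajectories of horizon `T`. -/
abbrev Traj (mx my ms T : ℕ) :=
  Fin (ms + 1) × (Fin T → Fin (mx + 1)) × (Fin T → Fin (my + 1))

variable {mx my ms T : ℕ}

/-- Demand at (0-based) time `t`, as an integer (junk value `0` for `t ≥ T`). -/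
def Xat (ω : Traj mx my ms T) (t : ℕ) : ℤ :=
  if h : t < T then ((ω.2.1 ⟨t, h⟩ : ℕ) : ℤ) else 0

/-- Output at (0-based) time `t`, as an integer (junk value `0` for `t ≥ T`). -/
def Yat (ω : Traj mx my ms T) (t : ℕ) : ℤ :=
  if h : t < T then ((ω.2.2 ⟨t, h⟩ : ℕ) : ℤ) else 0

/-- Battery state at (0-based) time `t`: `S_{t+1} = S_t + Y_t - X_t`, `Sat ω 0 = S₁`. -/
def Sat (ω : Traj mx my ms T) (t : ℕ) : ℤ :=
  ((ω.1 : ℕ) : ℤ) + ∑ i ∈ Finset.range t, (Yat ω i - Xat ω i)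

/-- `W_t = S_t - X_t`. -/
def Wat (ω : Traj mx my ms T) (t : ℕ) : ℤ := Sat ω t - Xat ω t

/-- A general causal (class `Q_A`) randomized battery policy:
`q_t(y_t | x^t, s^t, y^{t-1})`; since `s^t` is determined by `(s₁, x^{t-1}, y^{t-1})`,
the policy is a function of `(x^t, s₁, y^{t-1})`. -/
def PolicyA (mx my ms : ℕ) : Type :=
  (t : ℕ) → (Fin (t + 1) → Fin (mx + 1)) → Fin (ms + 1) → (Fin t → Fin (my + 1)) →
    Fin (my + 1) → ℝ

/-- A class-`Q_B` policy: `q_t(y_t | x_t, s_t, y^{t-1})`. -/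
def PolicyB (mx my ms : ℕ) : Type :=
  (t : ℕ) → Fin (mx + 1) → ℤ → (Fin t → Fin (my + 1)) → Fin (my + 1) → ℝ

/-- The battery state `S_t` computed from `s₁` and the history `(x^t, y^{t-1})`. -/
def hstate {t : ℕ} (s1 : Fin (ms + 1)) (x : Fin (t + 1) → Fin (mx + 1))
    (y : Fin t → Fin (my + 1)) : ℤ :=
  ((s1 : ℕ) : ℤ) + ∑ i : Fin t, (((y i : ℕ) : ℤ) - ((x i.castSucc : ℕ) : ℤ))

/-- Each `q_t(· | x^t, s^t, y^{t-1})` is a pmf on `𝒴`. -/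
def CondPMFA (q : PolicyA mx my ms) : Prop :=
  ∀ (t : ℕ) (x : Fin (t + 1) → Fin (mx + 1)) (s1 : Fin (ms + 1)) (y : Fin t → Fin (my + 1)),
    (∀ yt, 0 ≤ q t x s1 y yt) ∧ ∑ yt, q t x s1 y yt = 1

/-- Feasibility of a class-`Q_A` policy: conditional pmfs supported on
`𝒴₀(s_t - x_t) = {y ∈ 𝒴 : s_t - x_t + y ∈ 𝒮}`. -/
def FeasibleA (q : PolicyA mx my ms) : Prop :=
  CondPMFA q ∧
  ∀ (t : ℕ) (x : Fin (t + 1) → Fin (mx + 1)) (s1 : Fin (ms + 1)) (y : Fin t → Fin (my + 1)),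
    ∀ yt, q t x s1 y yt ≠ 0 →
      0 ≤ hstate s1 x y - ((x (Fin.last t) : ℕ) : ℤ) + ((yt : ℕ) : ℤ) ∧
      hstate s1 x y - ((x (Fin.last t) : ℕ) : ℤ) + ((yt : ℕ) : ℤ) ≤ (ms : ℤ)

/-- Each `q_t(· | x_t, s_t, y^{t-1})` is a pmf on `𝒴`. -/
def CondPMFB (q : PolicyB mx my ms) : Prop :=
  ∀ (t : ℕ) (xt : Fin (mx + 1)) (s : ℤ) (y : Fin t → Fin (my + 1)),
    (∀ yt, 0 ≤ q t xt s y yt) ∧ ∑ yt, q t xt s y yt = 1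

/-- Feasibility of a class-`Q_B` policy. -/
def FeasibleB (q : PolicyB mx my ms) : Prop :=
  CondPMFB q ∧
  ∀ (t : ℕ) (xt : Fin (mx + 1)) (s : ℤ) (y : Fin t → Fin (my + 1)),
    0 ≤ s → s ≤ (ms : ℤ) →
    ∀ yt, q t xt s y yt ≠ 0 →
      0 ≤ s - ((xt : ℕ) : ℤ) + ((yt : ℕ) : ℤ) ∧
      s - ((xt : ℕ) : ℤ) + ((yt : ℕ) : ℤ) ≤ (ms : ℤ)

/-- The demand prefix `x^t = (x_0, …, x_t)` of a trajectory. -/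
def prefX (ω : Traj mx my ms T) (t : Fin T) : Fin ((t : ℕ) + 1) → Fin (mx + 1) :=
  fun i => ω.2.1 ⟨(i : ℕ), lt_of_le_of_lt (Nat.lt_succ_iff.mp i.isLt) t.isLt⟩

/-- The output prefix `y^{t-1} = (y_0, …, y_{t-1})` of a trajectory. -/
def prefY (ω : Traj mx my ms T) (t : Fin T) : Fin (t : ℕ) → Fin (my + 1) :=
  fun i => ω.2.2 ⟨(i : ℕ), i.isLt.trans t.isLt⟩

/-- Joint law on trajectories induced by i.i.d. demand `PX`, initial battery pmf `PS1`
(independent of the demand), and a class-`Q_A` policy `q`. -/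
noncomputable def jointA (PS1 : Fin (ms + 1) → ℝ) (PX : Fin (mx + 1) → ℝ)
    (q : PolicyA mx my ms) (T : ℕ) (ω : Traj mx my ms T) : ℝ :=
  PS1 ω.1 * ∏ t : Fin T,
    (PX (ω.2.1 t) * q (t : ℕ) (prefX ω t) ω.1 (prefY ω t) (ω.2.2 t))

/-- Weight of a demand trajectory under a Markov chain `(PX1, Qm)`. -/
noncomputable def markovWt (PX1 : Fin (mx + 1) → ℝ) (Qm : Fin (mx + 1) → Fin (mx + 1) → ℝ)
    {T : ℕ} (x : Fin T → Fin (mx + 1)) : ℝ :=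
  ∏ t : Fin T,
    if _h : (t : ℕ) = 0 then PX1 (x t)
    else Qm (x ⟨(t : ℕ) - 1, lt_of_le_of_lt (Nat.sub_le _ _) t.isLt⟩) (x t)

/-- Joint law on trajectories induced by Markov demand and a class-`Q_A` policy. -/
noncomputable def jointAMarkov (PS1 : Fin (ms + 1) → ℝ) (PX1 : Fin (mx + 1) → ℝ)
    (Qm : Fin (mx + 1) → Fin (mx + 1) → ℝ) (q : PolicyA mx my ms) (T : ℕ)
    (ω : Traj mx my ms T) : ℝ :=
  PS1 ω.1 * markovWt PX1 Qm ω.2.1 *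
    ∏ t : Fin T, q (t : ℕ) (prefX ω t) ω.1 (prefY ω t) (ω.2.2 t)

/-- Joint law on trajectories induced by Markov demand and a class-`Q_B` policy. -/
noncomputable def jointBMarkov (PS1 : Fin (ms + 1) → ℝ) (PX1 : Fin (mx + 1) → ℝ)
    (Qm : Fin (mx + 1) → Fin (mx + 1) → ℝ) (q : PolicyB mx my ms) (T : ℕ)
    (ω : Traj mx my ms T) : ℝ :=
  PS1 ω.1 * markovWt PX1 Qm ω.2.1 *
    ∏ t : Fin T, q (t : ℕ) (ω.2.1 t) (Sat ω (t : ℕ)) (prefY ω t) (ω.2.2 t)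

/-- The memoryless time-invariant policy `q_t(y | x, s) = b*(y | s - x)`, as a member of the
class of general causal policies. -/
noncomputable def structuredPolicyA (mx my ms : ℕ) (PX : Fin (mx + 1) → ℝ)
    (θ : Fin (ms + 1) → ℝ) : PolicyA mx my ms :=
  fun t x s1 y yt => bstar mx my ms PX θ (hstate s1 x y - ((x (Fin.last t) : ℕ) : ℤ)) yt


/-- The deterministic binary policy `Y_t = 1 - S_t`, as a general causal policy on the
binary model `𝒳 = 𝒴 = 𝒮 = {0,1}`. -/
noncomputable def binFlipPolicy : PolicyA 1 1 1 :=
  fun t x s1 y yt => if ((yt : ℕ) : ℤ) = 1 - hstate s1 x y then 1 else 0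


/-! ### Auxiliary general lemmas about `pr` and `ent` -/

section EntLemmas
variable {Ω α β : Type*} [Fintype Ω]

lemma pr_nonneg [DecidableEq α] {p : Ω → ℝ} (hp : ∀ ω, 0 ≤ p ω) (Z : Ω → α) (z : α) :
    0 ≤ pr p Z z :=
  Finset.sum_nonneg fun ω _ => hp ω

lemma pr_congr [DecidableEq α] {p : Ω → ℝ} {Z Z' : Ω → α}
    (h : ∀ ω, p ω ≠ 0 → Z ω = Z' ω) (z : α) : pr p Z z = pr p Z' z := by
  unfold pr
  rw [Finset.sum_filter, Finset.sum_filter]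
  refine Finset.sum_congr rfl fun ω _ => ?_
  by_cases hω : p ω = 0
  · simp [hω]
  · rw [h ω hω]

lemma pr_eq_zero_of_notMem [DecidableEq α] {p : Ω → ℝ} {Z : Ω → α} {z : α}
    (h : z ∉ Finset.univ.image Z) : pr p Z z = 0 := by
  unfold pr
  rw [Finset.filter_false_of_mem, Finset.sum_empty]
  intro ω _ hz
  exact h (Finset.mem_image.2 ⟨ω, Finset.mem_univ _, hz⟩)

lemma ent_eq_sum_superset [DecidableEq α] (p : Ω → ℝ) (Z : Ω → α) {s : Finset α}
    (hs : Finset.univ.image Z ⊆ s) :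
    ent p Z = -∑ z ∈ s, pr p Z z * Real.logb 2 (pr p Z z) := by
  unfold ent
  congr 1
  refine Finset.sum_subset hs fun z _ hz => ?_
  rw [pr_eq_zero_of_notMem hz]; simp

lemma ent_congr [DecidableEq α] {p : Ω → ℝ} {Z Z' : Ω → α}
    (h : ∀ ω, p ω ≠ 0 → Z ω = Z' ω) : ent p Z = ent p Z' := by
  rw [ent_eq_sum_superset p Z (s := Finset.univ.image Z ∪ Finset.univ.image Z')
    Finset.subset_union_left,
    ent_eq_sum_superset p Z' (s := Finset.univ.image Z ∪ Finset.univ.image Z')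
    Finset.subset_union_right]
  congr 1
  exact Finset.sum_congr rfl fun z _ => by rw [pr_congr h]

lemma ent_comp_inj [DecidableEq α] [DecidableEq β] (p : Ω → ℝ) (Z : Ω → α)
    {f : α → β} (hf : Function.Injective f) : ent p (fun ω => f (Z ω)) = ent p Z := by
  unfold ent
  have himg : Finset.univ.image (fun ω => f (Z ω)) = (Finset.univ.image Z).image f := by
    rw [Finset.image_image]; rfl
  have hpr : ∀ z : α, pr p (fun ω => f (Z ω)) (f z) = pr p Z z := by
    intro z
    unfold pr
    congr 1
    ext ω
    simp [hf.eq_iff]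
  rw [himg, Finset.sum_image (fun a _ b _ hab => hf hab)]
  congr 1
  exact Finset.sum_congr rfl fun z _ => by rw [hpr]

lemma sum_pr_eq_one [DecidableEq α] {p : Ω → ℝ} (hp : IsPMF p) (Z : Ω → α) :
    ∑ z ∈ Finset.univ.image Z, pr p Z z = 1 := by
  unfold pr
  rw [Finset.sum_fiberwise_of_maps_to (fun ω _ => Finset.mem_image_of_mem Z (Finset.mem_univ ω))]
  exact hp.2

lemma ent_ge_of_bound [DecidableEq α] {p : Ω → ℝ} (hp : IsPMF p) (Z : Ω → α)
    {c : ℝ} (hbd : ∀ z, pr p Z z ≤ c) :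
    -Real.logb 2 c ≤ ent p Z := by
  unfold ent
  have key : ∀ z ∈ Finset.univ.image Z,
      pr p Z z * (-Real.logb 2 c) ≤ -(pr p Z z * Real.logb 2 (pr p Z z)) := by
    intro z _
    rcases eq_or_lt_of_le (pr_nonneg hp.1 Z z) with h0 | h0
    · rw [← h0]; simp
    · have hlog : Real.logb 2 (pr p Z z) ≤ Real.logb 2 c :=
        Real.logb_le_logb_of_le (b := 2) (by norm_num) h0 (hbd z)
      nlinarith [hbd z]
  calc -Real.logb 2 c = (∑ z ∈ Finset.univ.image Z, pr p Z z) * (-Real.logb 2 c) := by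
        rw [sum_pr_eq_one hp Z, one_mul]
    _ = ∑ z ∈ Finset.univ.image Z, pr p Z z * (-Real.logb 2 c) := by rw [Finset.sum_mul]
    _ ≤ ∑ z ∈ Finset.univ.image Z, -(pr p Z z * Real.logb 2 (pr p Z z)) :=
        Finset.sum_le_sum key
    _ = -∑ z ∈ Finset.univ.image Z, pr p Z z * Real.logb 2 (pr p Z z) := by
        rw [Finset.sum_neg_distrib]

end EntLemmas

/-! ### The binary flip-policy model -/

section BinaryFlip
variable {T : ℕ}

lemma Yat_coe (ω : Traj 1 1 1 T) (t : Fin T) : Yat ω (t : ℕ) = ((ω.2.2 t : ℕ) : ℤ) := by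
  simp [Yat, t.isLt]

lemma Xat_coe (ω : Traj 1 1 1 T) (t : Fin T) : Xat ω (t : ℕ) = ((ω.2.1 t : ℕ) : ℤ) := by
  simp [Xat, t.isLt]

lemma hstate_pref (ω : Traj 1 1 1 T) (t : Fin T) :
    hstate ω.1 (prefX ω t) (prefY ω t) = Sat ω (t : ℕ) := by
  unfold hstate Sat
  congr 1
  rw [← Fin.sum_univ_eq_sum_range (fun i => Yat ω i - Xat ω i) (t : ℕ)]
  refine Finset.sum_congr rfl fun i _ => ?_
  have h1 : (i : ℕ) < T := i.isLt.trans t.isLt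
  simp [prefX, prefY, Yat, Xat, h1, Fin.castSucc, Fin.castAdd, Fin.castLE]

/-- On the binary model, the "good event" of the flip policy: `Y_t = 1 - S_t` for all `t`. -/
def Good (ω : Traj 1 1 1 T) : Prop := ∀ t : Fin T, Yat ω (t : ℕ) = 1 - Sat ω (t : ℕ)

lemma jointA_flip_eq (PS1 : Fin 2 → ℝ) (ω : Traj 1 1 1 T) :
    jointA PS1 (fun _ => (1 / 2 : ℝ)) binFlipPolicy T ω =
      PS1 ω.1 * ((1 / 2 : ℝ) ^ T * if Good ω then 1 else 0) := by
  unfold jointA binFlipPolicy Good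
  rw [Finset.prod_mul_distrib, Finset.prod_const, Finset.card_univ, Fintype.card_fin]
  congr 1
  congr 1
  calc (∏ t : Fin T, if ((ω.2.2 t : ℕ) : ℤ) = 1 - hstate ω.1 (prefX ω t) (prefY ω t)
          then (1 : ℝ) else 0)
      = ∏ t : Fin T, (if Yat ω (t : ℕ) = 1 - Sat ω (t : ℕ) then (1 : ℝ) else 0) := by
        refine Finset.prod_congr rfl fun t _ => ?_
        rw [hstate_pref, Yat_coe]
    _ = _ := by rw [Finset.prod_boole]; simp

lemma support_good {PS1 : Fin 2 → ℝ} {ω : Traj 1 1 1 T}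
    (h : jointA PS1 (fun _ => (1 / 2 : ℝ)) binFlipPolicy T ω ≠ 0) : Good ω := by
  rw [jointA_flip_eq] at h
  by_contra hg
  simp [hg] at h

lemma Sat_zero (ω : Traj 1 1 1 T) : Sat ω 0 = ((ω.1 : ℕ) : ℤ) := by simp [Sat]

lemma Sat_succ (ω : Traj 1 1 1 T) (t : ℕ) :
    Sat ω (t + 1) = Sat ω t + (Yat ω t - Xat ω t) := by
  simp [Sat, Finset.sum_range_succ]; ring

lemma good_Sat_succ {ω : Traj 1 1 1 T} (hg : Good ω) {t : ℕ} (ht : t < T) :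
    Sat ω (t + 1) = 1 - Xat ω t := by
  have h := hg ⟨t, ht⟩
  simp only [Fin.val_mk] at h
  rw [Sat_succ]
  linarith

lemma Xat_bounds (ω : Traj 1 1 1 T) (t : ℕ) : 0 ≤ Xat ω t ∧ Xat ω t ≤ 1 := by
  unfold Xat
  split
  · rename_i h
    have := (ω.2.1 ⟨t, h⟩).isLt
    omega
  · omega

lemma good_XY {ω : Traj 1 1 1 T} (hg : Good ω) {t : ℕ} (ht : t + 1 < T) :
    Xat ω t = Yat ω (t + 1) := by
  have h1 := hg ⟨t + 1, ht⟩
  simp only [Fin.val_mk] at h1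
  have h2 := good_Sat_succ hg (Nat.lt_of_succ_lt ht)
  rw [h2] at h1
  linarith

/-- Flip on `{0,1}`. -/
def flipb : Fin 2 → Fin 2 := fun b => ⟨1 - (b : ℕ), by omega⟩

lemma flipb_coe (b : Fin 2) : ((flipb b : ℕ) : ℤ) = 1 - ((b : ℕ) : ℤ) := by
  have := b.isLt
  simp only [flipb]
  omega

/-- The deterministic output trajectory of the flip policy. -/
def yOf {n : ℕ} (s1 : Fin 2) (x : Fin (n + 1) → Fin 2) : Fin (n + 1) → Fin 2 :=
  fun t => if h : (t : ℕ) = 0 then flipb s1 else x ⟨(t : ℕ) - 1, by omega⟩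

lemma yOf_zero {n : ℕ} (s1 : Fin 2) (x : Fin (n + 1) → Fin 2) :
    yOf s1 x 0 = flipb s1 := by simp [yOf]

lemma yOf_succ {n : ℕ} (s1 : Fin 2) (x : Fin (n + 1) → Fin 2) {m : ℕ} (h : m + 1 < n + 1)
    (h' : m < n + 1) : yOf s1 x ⟨m + 1, h⟩ = x ⟨m, h'⟩ := by
  simp only [yOf]
  rw [dif_neg (by simp)]
  congr 1

lemma good_iff {n : ℕ} (ω : Traj 1 1 1 (n + 1)) :
    Good ω ↔ ω.2.2 = yOf ω.1 ω.2.1 := by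
  constructor
  · intro hg
    funext t
    induction t using Fin.cases with
    | zero =>
      have h := hg 0
      have hc := Yat_coe ω 0
      rw [Fin.val_zero] at hc
      rw [Fin.val_zero, hc, Sat_zero] at h
      have h1 := (ω.2.2 0).isLt
      have h2 := ω.1.isLt
      rw [yOf_zero]
      apply Fin.ext
      simp only [flipb]
      omega
    | succ i =>
      have hi : (i : ℕ) + 1 < n + 1 := Nat.succ_lt_succ i.isLt
      have h := good_XY hg hi
      have hx : Xat ω (i : ℕ) = ((ω.2.1 i.castSucc : ℕ) : ℤ) := by
        have : (i : ℕ) < n + 1 := Nat.lt_succ_of_lt i.isLt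
        simp [Xat, this, Fin.castSucc, Fin.castAdd, Fin.castLE]
      have hy : Yat ω ((i : ℕ) + 1) = ((ω.2.2 i.succ : ℕ) : ℤ) := by
        simp [Yat, hi, Fin.succ]
      rw [hx, hy] at h
      have hz : yOf ω.1 ω.2.1 i.succ = ω.2.1 i.castSucc := by
        have e : i.succ = (⟨(i : ℕ) + 1, hi⟩ : Fin (n + 1)) := rfl
        rw [e, yOf_succ _ _ hi (Nat.lt_succ_of_lt i.isLt)]
        congr 1
      rw [hz]
      apply Fin.ext
      omega
  · intro hy t
    suffices H : ∀ m : ℕ, m < n + 1 → Yat ω m = 1 - Sat ω m ∧ Sat ω (m + 1) = 1 - Xat ω m by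
      exact (H (t : ℕ) t.isLt).1
    intro m
    induction m with
    | zero =>
      intro h0
      have hy0 : ω.2.2 0 = flipb ω.1 := by rw [hy, yOf_zero]
      have hY0 : Yat ω 0 = 1 - ((ω.1 : ℕ) : ℤ) := by
        have hc := Yat_coe ω 0
        rw [Fin.val_zero] at hc
        rw [hc, hy0, flipb_coe]
      constructor
      · rw [hY0, Sat_zero]
      · rw [Sat_succ, hY0, Sat_zero]; ring
    | succ m ih =>
      intro h
      have hm : m < n + 1 := Nat.lt_of_succ_lt h
      obtain ⟨ih1, ih2⟩ := ih hm
      have hmn : m < n := Nat.lt_of_succ_lt_succ h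
      have hYm1 : Yat ω (m + 1) = Xat ω m := by
        have hsucc : ω.2.2 ⟨m + 1, h⟩ = ω.2.1 ⟨m, hm⟩ := by
          rw [hy, yOf_succ _ _ h hm]
        have h1 : Yat ω (m + 1) = ((ω.2.2 ⟨m + 1, h⟩ : ℕ) : ℤ) := by simp [Yat, h]
        have h2 : Xat ω m = ((ω.2.1 ⟨m, hm⟩ : ℕ) : ℤ) := by simp [Xat, hm]
        rw [h1, h2, hsucc]
      constructor
      · rw [hYm1, ih2]; ring
      · rw [Sat_succ, hYm1, ih2]; ring

lemma jointA_flip_eq' {n : ℕ} (PS1 : Fin 2 → ℝ) (ω : Traj 1 1 1 (n + 1)) :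
    jointA PS1 (fun _ => (1 / 2 : ℝ)) binFlipPolicy (n + 1) ω =
      PS1 ω.1 * (1 / 2 : ℝ) ^ (n + 1) * (if ω.2.2 = yOf ω.1 ω.2.1 then 1 else 0) := by
  rw [jointA_flip_eq, mul_assoc]
  congr 1
  congr 1
  rw [if_congr (good_iff ω) rfl rfl]

lemma jointA_flip_pmf {n : ℕ} (PS1 : Fin 2 → ℝ) (hPS1 : IsPMF PS1) :
    IsPMF (jointA (mx := 1) (my := 1) (ms := 1) PS1 (fun _ => (1 / 2 : ℝ))
      binFlipPolicy (n + 1)) := by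
  constructor
  · intro ω
    rw [jointA_flip_eq']
    have h1 := hPS1.1 ω.1
    have h2 : (0 : ℝ) ≤ (1 / 2 : ℝ) ^ (n + 1) := by positivity
    split <;> nlinarith
  · calc ∑ ω : Traj 1 1 1 (n + 1),
          jointA PS1 (fun _ => (1 / 2 : ℝ)) binFlipPolicy (n + 1) ω
        = ∑ s1 : Fin 2, ∑ x : Fin (n + 1) → Fin 2, ∑ y : Fin (n + 1) → Fin 2,
            PS1 s1 * (1 / 2 : ℝ) ^ (n + 1) * (if y = yOf s1 x then 1 else 0) := by
          rw [Fintype.sum_prod_type]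
          refine Finset.sum_congr rfl fun s1 _ => ?_
          rw [Fintype.sum_prod_type]
          exact Finset.sum_congr rfl fun x _ => Finset.sum_congr rfl fun y _ =>
            jointA_flip_eq' PS1 (s1, x, y)
      _ = ∑ s1 : Fin 2, ∑ _x : Fin (n + 1) → Fin 2, PS1 s1 * (1 / 2 : ℝ) ^ (n + 1) := by
          refine Finset.sum_congr rfl fun s1 _ => Finset.sum_congr rfl fun x _ => ?_
          simp [mul_ite]
      _ = 1 := by
          simp only [Finset.sum_const, Finset.card_univ, Fintype.card_fun, Fintype.card_fin,
            nsmul_eq_mul]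
          rw [← Finset.mul_sum, ← Finset.sum_mul, hPS1.2, one_mul]
          push_cast
          rw [← mul_pow]
          norm_num

lemma prB_le {n : ℕ} (PS1 : Fin 2 → ℝ) (hPS1 : IsPMF PS1) (y : Fin (n + 1) → Fin 2) :
    pr (jointA (mx := 1) (my := 1) (ms := 1) PS1 (fun _ => (1 / 2 : ℝ))
        binFlipPolicy (n + 1)) (fun ω => ω.2.2) y ≤ (1 / 2 : ℝ) ^ n := by
  have hcard : ∀ s1 : Fin 2,
      ∑ x : Fin (n + 1) → Fin 2, (if y = yOf s1 x then (1 : ℝ) else 0) ≤ 2 := by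
    intro s1
    classical
    have : ∑ x : Fin (n + 1) → Fin 2, (if y = yOf s1 x then (1 : ℝ) else 0)
        = ((Finset.univ.filter fun x : Fin (n + 1) → Fin 2 => y = yOf s1 x).card : ℝ) := by
      rw [Finset.sum_boole]
    rw [this]
    have hle : (Finset.univ.filter fun x : Fin (n + 1) → Fin 2 => y = yOf s1 x).card ≤
        (Finset.univ : Finset (Fin 2)).card := by
      apply Finset.card_le_card_of_injOn (fun x => x (Fin.last n))
        (fun _ _ => Finset.mem_univ _)
      intro x1 hx1 x2 hx2 hlast
      simp only [Finset.mem_coe, Finset.mem_filter] at hx1 hx2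
      funext i
      refine Fin.lastCases ?_ ?_ i
      · exact hlast
      · intro j
        have hj : (j : ℕ) + 1 < n + 1 := Nat.succ_lt_succ j.isLt
        have hj' : (j : ℕ) < n + 1 := Nat.lt_succ_of_lt j.isLt
        have ej : j.succ = (⟨(j : ℕ) + 1, hj⟩ : Fin (n + 1)) := rfl
        have ec : j.castSucc = (⟨(j : ℕ), hj'⟩ : Fin (n + 1)) := rfl
        have e1 : x1 j.castSucc = y j.succ := by
          rw [hx1.2, ej, yOf_succ _ _ hj hj', ec]
        have e2 : x2 j.castSucc = y j.succ := by
          rw [hx2.2, ej, yOf_succ _ _ hj hj', ec]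
        rw [e1, e2]
    have : ((Finset.univ : Finset (Fin 2)).card : ℝ) = 2 := by simp
    calc ((Finset.univ.filter fun x : Fin (n + 1) → Fin 2 => y = yOf s1 x).card : ℝ)
        ≤ ((Finset.univ : Finset (Fin 2)).card : ℝ) := by exact_mod_cast hle
      _ = 2 := this
  calc pr (jointA PS1 (fun _ => (1 / 2 : ℝ)) binFlipPolicy (n + 1)) (fun ω => ω.2.2) y
      = ∑ s1 : Fin 2, ∑ x : Fin (n + 1) → Fin 2,
          PS1 s1 * (1 / 2 : ℝ) ^ (n + 1) * (if y = yOf s1 x then 1 else 0) := by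
        unfold pr
        rw [Finset.sum_filter, Fintype.sum_prod_type]
        refine Finset.sum_congr rfl fun s1 _ => ?_
        rw [Fintype.sum_prod_type]
        refine Finset.sum_congr rfl fun x _ => ?_
        rw [Finset.sum_ite_eq' Finset.univ y
          (fun y' => jointA PS1 (fun _ => (1 / 2 : ℝ)) binFlipPolicy (n + 1) (s1, x, y'))]
        simp only [Finset.mem_univ, if_true]
        exact jointA_flip_eq' PS1 (s1, x, y)
    _ = ∑ s1 : Fin 2, PS1 s1 * (1 / 2 : ℝ) ^ (n + 1) *
          (∑ x : Fin (n + 1) → Fin 2, if y = yOf s1 x then 1 else 0) := by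
        refine Finset.sum_congr rfl fun s1 _ => ?_
        rw [Finset.mul_sum]
    _ ≤ ∑ s1 : Fin 2, PS1 s1 * (1 / 2 : ℝ) ^ (n + 1) * 2 := by
        refine Finset.sum_le_sum fun s1 _ => ?_
        have h1 : (0 : ℝ) ≤ PS1 s1 * (1 / 2 : ℝ) ^ (n + 1) := by
          have := hPS1.1 s1
          positivity
        exact mul_le_mul_of_nonneg_left (hcard s1) h1
    _ = (1 / 2 : ℝ) ^ n := by
        rw [← Finset.sum_mul, ← Finset.sum_mul, hPS1.2, one_mul, pow_succ]
        ring

end BinaryFlip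

/-- In the binary model with i.i.d. equiprobable demand independent of
`S₁`, dynamics `S_{t+1} = S_t + Y_t - X_t` and the deterministic policy `Y_t = 1 - S_t`:
the policy is feasible (`S_{t+1} ∈ 𝒮` a.s.), `X_t = Y_{t+1}` a.s. (so `X^{T-1}` is a
function of `Y^T`), and the leakage satisfies `(1/T) I(S₁, X^T; Y^T) ≥ (T-1)/T`. -/
theorem binary_flip_policy_leakage (T : ℕ) (hT : 1 ≤ T)
    (PS1 : Fin 2 → ℝ) (hPS1 : IsPMF PS1) :
    let p := jointA (mx := 1) (my := 1) (ms := 1) PS1 (fun _ => (1 / 2 : ℝ))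
      binFlipPolicy T
    -- feasibility: on the support, the battery state stays in 𝒮 = {0, 1}
    (∀ ω : Traj 1 1 1 T, p ω ≠ 0 → ∀ t : ℕ, t < T →
        0 ≤ Sat ω (t + 1) ∧ Sat ω (t + 1) ≤ 1) ∧
    -- on the support, X_t = Y_{t+1}
    (∀ ω : Traj 1 1 1 T, p ω ≠ 0 → ∀ t : ℕ, t + 1 < T → Xat ω t = Yat ω (t + 1)) ∧
    -- leakage lower bound
    ((T - 1 : ℝ) / T ≤
      mutInfo p (fun ω => (ω.1, ω.2.1)) (fun ω => ω.2.2) / T) := by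
  intro p
  have hpdef : p = jointA (mx := 1) (my := 1) (ms := 1) PS1 (fun _ => (1 / 2 : ℝ))
      binFlipPolicy T := rfl
  obtain ⟨n, rfl⟩ : ∃ n, T = n + 1 := ⟨T - 1, by omega⟩
  refine ⟨?_, ?_, ?_⟩
  · -- feasibility
    intro ω hω t ht
    have hg : Good ω := support_good (by rw [hpdef] at hω; exact hω)
    have h1 := good_Sat_succ hg ht
    have h2 := Xat_bounds ω t
    constructor <;> [linarith [h2.2]; linarith [h2.1]]
  · -- X_t = Y_{t+1}
    intro ω hω t ht
    have hg : Good ω := support_good (by rw [hpdef] at hω; exact hω)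
    exact good_XY hg ht
  · -- leakage bound
    have hpmf : IsPMF p := by rw [hpdef]; exact jointA_flip_pmf PS1 hPS1
    -- the pair (A, B) is a.s. an injective function of A
    have hae : ∀ ω : Traj 1 1 1 (n + 1), p ω ≠ 0 →
        ((ω.1, ω.2.1), ω.2.2) = ((ω.1, ω.2.1), yOf ω.1 ω.2.1) := by
      intro ω hω
      have hg : Good ω := support_good (by rw [hpdef] at hω; exact hω)
      rw [(good_iff ω).mp hg]
    have hAB : ent p (fun ω : Traj 1 1 1 (n + 1) => ((ω.1, ω.2.1), ω.2.2)) =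
        ent p (fun ω : Traj 1 1 1 (n + 1) => (ω.1, ω.2.1)) := by
      rw [ent_congr hae]
      exact ent_comp_inj p (fun ω : Traj 1 1 1 (n + 1) => (ω.1, ω.2.1))
        (f := fun a : Fin 2 × (Fin (n + 1) → Fin 2) => (a, yOf a.1 a.2))
        (fun a b hab => congrArg Prod.fst hab)
    have hMI : mutInfo p (fun ω : Traj 1 1 1 (n + 1) => (ω.1, ω.2.1))
        (fun ω : Traj 1 1 1 (n + 1) => ω.2.2) =
        ent p (fun ω : Traj 1 1 1 (n + 1) => ω.2.2) := by
      unfold mutInfo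
      rw [hAB]
      ring
    have hbd : ∀ y : Fin (n + 1) → Fin 2,
        pr p (fun ω : Traj 1 1 1 (n + 1) => ω.2.2) y ≤ (1 / 2 : ℝ) ^ n := by
      intro y; rw [hpdef]; exact prB_le PS1 hPS1 y
    have hent : (n : ℝ) ≤ ent p (fun ω : Traj 1 1 1 (n + 1) => ω.2.2) := by
      have h := ent_ge_of_bound hpmf (fun ω : Traj 1 1 1 (n + 1) => ω.2.2) hbd
      have hlog : Real.logb 2 ((1 / 2 : ℝ) ^ n) = -(n : ℝ) := by
        rw [Real.logb_pow]
        rw [one_div, Real.logb_inv, Real.logb_self_eq_one (by norm_num)]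
        ring
      rw [hlog] at h
      simpa using h
    have hT : (0 : ℝ) < ((n : ℝ) + 1) := by positivity
    have hnum : ((n + 1 : ℕ) : ℝ) - 1 = (n : ℝ) := by push_cast; ring
    have hden : ((n + 1 : ℕ) : ℝ) = (n : ℝ) + 1 := by push_cast; ring
    rw [hMI, hnum, hden]
    exact (div_le_div_iff_of_pos_right hT).mpr hent
end SmartMeter
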